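/- arXiv:1603.07135 — 4 statements merged into one kernel-verified Lean document; each statement's English description precedes it below -/
import Mathlib

section
/- If q' and q'' are both maximizers of f(q) = Σ_j p_j log S_j(q) over the standard simplex, then S_j(q') = S_j(q'') for every j with p_j > 0. -/
open Finset

lemma log_mid_ge (a b : ℝ) (ha : 0 < a) (hb : 0 < b) :
    (Real.log a + Real.log b) / 2 ≤ Real.log ((a + b) / 2) := by
  rcases eq_or_ne a b with h | h
  · subst h; rw [add_self_div_two, add_self_div_two]
  · have := strictConcaveOn_log_Ioi.2 (Set.mem_Ioi.2 ha) (Set.mem_Ioi.2 hb) h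
      (by norm_num : (0:ℝ) < 1/2) (by norm_num : (0:ℝ) < 1/2) (by norm_num)
    simp only [smul_eq_mul] at this
    have e : (1:ℝ)/2 * a + 1/2 * b = (a+b)/2 := by ring
    rw [e] at this
    linarith

lemma log_mid_eq_iff (a b : ℝ) (ha : 0 < a) (hb : 0 < b)
    (h : Real.log ((a + b) / 2) = (Real.log a + Real.log b) / 2) : a = b := by
  by_contra hne
  have := strictConcaveOn_log_Ioi.2 (Set.mem_Ioi.2 ha) (Set.mem_Ioi.2 hb) hne
    (by norm_num : (0:ℝ) < 1/2) (by norm_num : (0:ℝ) < 1/2) (by norm_num)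
  simp only [smul_eq_mul] at this
  have e : (1:ℝ)/2 * a + 1/2 * b = (a+b)/2 := by ring
  rw [e] at this
  linarith

/-- If `q'` and `q''` both maximize `f(q) = ∑ⱼ pⱼ log Sⱼ(q)` over the
standard simplex, then `Sⱼ(q') = Sⱼ(q'')` for every `j` with `pⱼ > 0`. -/
theorem optimal_sums_unique
    (n m : ℕ) (p : Fin n → ℝ) (C : Fin m → Finset (Fin n))
    (hp : ∀ j, 0 ≤ p j) (hpsum : ∑ j, p j = 1)
    (S : (Fin m → ℝ) → Fin n → ℝ)
    (hS : ∀ q j, S q j = ∑ i ∈ univ.filter (fun i => j ∈ C i), q i)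
    (f : (Fin m → ℝ) → ℝ)
    (hf : ∀ q, f q = ∑ j, p j * Real.log (S q j))
    (Feas : (Fin m → ℝ) → Prop)
    (hFeas : ∀ q, Feas q ↔ (∀ i, 0 ≤ q i) ∧ ∑ i, q i = 1 ∧
      ∀ j, 0 < p j → 0 < S q j)
    (q' q'' : Fin m → ℝ)
    (hq' : Feas q') (hq'' : Feas q'')
    (hmax' : ∀ q, Feas q → f q ≤ f q')
    (hmax'' : ∀ q, Feas q → f q ≤ f q'') :
    ∀ j, 0 < p j → S q' j = S q'' j := by
  obtain ⟨h1', h2', h3'⟩ := (hFeas q').1 hq'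
  obtain ⟨h1'', h2'', h3''⟩ := (hFeas q'').1 hq''
  set q : Fin m → ℝ := fun i => (q' i + q'' i) / 2 with hqdef
  have hSq : ∀ j, S q j = (S q' j + S q'' j) / 2 := by
    intro j
    rw [hS, hS, hS]
    rw [← Finset.sum_div, ← Finset.sum_add_distrib]
  have hFq : Feas q := by
    rw [hFeas]
    refine ⟨fun i => by have := h1' i; have := h1'' i; simp only [hqdef]; linarith, ?_, fun j hj => ?_⟩
    · simp only [hqdef, ← Finset.sum_div, Finset.sum_add_distrib, h2', h2'']
      norm_num
    · rw [hSq]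
      have := h3' j hj; have := h3'' j hj
      linarith
  have heq : f q' = f q'' := le_antisymm (hmax'' q' hq') (hmax' q'' hq'')
  -- each term nonneg
  have hterm : ∀ j : Fin n,
      0 ≤ p j * Real.log (S q j) - p j * ((Real.log (S q' j) + Real.log (S q'' j)) / 2) := by
    intro j
    rcases (hp j).eq_or_lt with h | h
    · rw [← h]; ring_nf; exact le_refl _
    · have := log_mid_ge _ _ (h3' j h) (h3'' j h)
      rw [hSq]
      nlinarith
  have hsumle : ∑ j, (p j * Real.log (S q j)
      - p j * ((Real.log (S q' j) + Real.log (S q'' j)) / 2)) ≤ 0 := by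
    rw [Finset.sum_sub_distrib]
    have h1 : ∑ j, p j * Real.log (S q j) = f q := (hf q).symm
    have : ∑ j, p j * ((Real.log (S q' j) + Real.log (S q'' j)) / 2)
        = (f q' + f q'') / 2 := by
      rw [hf, hf, ← Finset.sum_add_distrib, Finset.sum_div]
      apply Finset.sum_congr rfl; intro j _; ring
    rw [h1, this]
    have := hmax' q hFq
    linarith
  have hzero : ∀ j ∈ (univ : Finset (Fin n)),
      p j * Real.log (S q j) - p j * ((Real.log (S q' j) + Real.log (S q'' j)) / 2) = 0 := by
    have hsum0 : ∑ j, (p j * Real.log (S q j)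
        - p j * ((Real.log (S q' j) + Real.log (S q'' j)) / 2)) = 0 :=
      le_antisymm hsumle (Finset.sum_nonneg fun j _ => hterm j)
    exact (Finset.sum_eq_zero_iff_of_nonneg fun j _ => hterm j).1 hsum0
  intro j hj
  have h0 := hzero j (mem_univ j)
  have hlog : Real.log (S q j) = (Real.log (S q' j) + Real.log (S q'' j)) / 2 := by
    have hne : p j ≠ 0 := ne_of_gt hj
    have h0' : p j * (Real.log (S q j) - (Real.log (S q' j) + Real.log (S q'' j)) / 2) = 0 := by
      rw [mul_sub]; linarith
    rcases mul_eq_zero.1 h0' with h | h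
    · exact absurd h hne
    · linarith
  rw [hSq] at hlog
  exact log_mid_eq_iff _ _ (h3' j hj) (h3'' j hj) hlog
end

section
/- The set of maximizers of f(q) = Σ_j p_j log S_j(q) over the standard simplex is a convex polyhedron; specifically, it equals the set of feasible q satisfying the linear equations S_j(q) = s_j for all j, where s_j are the (common) optimal values of S_j. -/
open Finset

/-- The set of maximizers of `f(q) = ∑ⱼ pⱼ log Sⱼ(q)` over the standard
simplex is a convex polyhedron: it equals the set of feasible `q` satisfying the
linear equations `Sⱼ(q) = sⱼ`, where `sⱼ` are the (common) optimal values of `Sⱼ`. -/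
theorem maximizer_set_is_polyhedron
    (n m : ℕ) (p : Fin n → ℝ) (C : Fin m → Finset (Fin n))
    (hp : ∀ j, 0 < p j) (hpsum : ∑ j, p j = 1)
    (S : (Fin m → ℝ) → Fin n → ℝ)
    (hS : ∀ q j, S q j = ∑ i ∈ univ.filter (fun i => j ∈ C i), q i)
    (f : (Fin m → ℝ) → ℝ)
    (hf : ∀ q, f q = ∑ j, p j * Real.log (S q j))
    (Feas : (Fin m → ℝ) → Prop)
    (hFeas : ∀ q, Feas q ↔ (∀ i, 0 ≤ q i) ∧ ∑ i, q i = 1 ∧ ∀ j, 0 < S q j)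
    (qopt : Fin m → ℝ) (hqopt : Feas qopt)
    (hmax : ∀ q, Feas q → f q ≤ f qopt)
    (s : Fin n → ℝ) (hs : ∀ j, s j = S qopt j) :
    {q : Fin m → ℝ | Feas q ∧ ∀ q', Feas q' → f q' ≤ f q}
      = {q : Fin m → ℝ | (∀ i, 0 ≤ q i) ∧ ∑ i, q i = 1 ∧ ∀ j, S q j = s j} ∧
    Convex ℝ {q : Fin m → ℝ | (∀ i, 0 ≤ q i) ∧ ∑ i, q i = 1 ∧ ∀ j, S q j = s j} := by
  obtain ⟨h0', h1', hpos'⟩ := (hFeas qopt).1 hqopt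
  constructor
  · ext q
    simp only [Set.mem_setOf_eq]
    constructor
    · rintro ⟨hq, hqmax⟩
      obtain ⟨h0, h1, hpos⟩ := (hFeas q).1 hq
      refine ⟨h0, h1, fun j => ?_⟩
      rw [hs]
      by_contra hne
      -- midpoint
      set r : Fin m → ℝ := fun i => (q i + qopt i) / 2 with hr
      have hSr : ∀ j, S r j = (S q j + S qopt j) / 2 := by
        intro j
        simp [hS, hr, ← Finset.sum_add_distrib, Finset.sum_div]
      have hFr : Feas r := by
        rw [hFeas]
        refine ⟨fun i => by have := h0 i; have := h0' i; positivity, ?_, fun j => ?_⟩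
        · rw [← Finset.sum_div, Finset.sum_add_distrib, h1, h1']; norm_num
        · rw [hSr j]
          have := hpos j; have := hpos' j; positivity
      have hfq : f q = f qopt := le_antisymm (hmax q hq) (hqmax qopt hqopt)
      -- strict concavity of log
      have key : ∀ j', p j' * ((1/2) * Real.log (S q j') + (1/2) * Real.log (S qopt j'))
          ≤ p j' * Real.log (S r j') := by
        intro j'
        refine mul_le_mul_of_nonneg_left ?_ (hp j').le
        have := strictConcaveOn_log_Ioi.concaveOn.2 (Set.mem_Ioi.2 (hpos j'))
          (Set.mem_Ioi.2 (hpos' j')) (by norm_num : (0:ℝ) ≤ 1/2) (by norm_num : (0:ℝ) ≤ 1/2)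
          (by norm_num)
        rw [hSr j', show (S q j' + S qopt j') / 2
          = (1/2:ℝ) • S q j' + (1/2:ℝ) • S qopt j' by simp only [smul_eq_mul]; ring]
        simpa [smul_eq_mul] using this
      have keyj : p j * ((1/2) * Real.log (S q j) + (1/2) * Real.log (S qopt j))
          < p j * Real.log (S r j) := by
        refine mul_lt_mul_of_pos_left ?_ (hp j)
        have hne' : S q j ≠ S qopt j := hne
        have := strictConcaveOn_log_Ioi.2 (Set.mem_Ioi.2 (hpos j))
          (Set.mem_Ioi.2 (hpos' j)) hne' (by norm_num : (0:ℝ) < 1/2)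
          (by norm_num : (0:ℝ) < 1/2) (by norm_num)
        rw [hSr j, show (S q j + S qopt j) / 2
          = (1/2:ℝ) • S q j + (1/2:ℝ) • S qopt j by simp only [smul_eq_mul]; ring]
        simpa [smul_eq_mul] using this
      have hlt : (f q + f qopt) / 2 < f r := by
        rw [hf, hf, hf, ← Finset.sum_add_distrib, Finset.sum_div]
        refine Finset.sum_lt_sum (fun j' _ => ?_) ⟨j, Finset.mem_univ j, ?_⟩
        · calc (p j' * Real.log (S q j') + p j' * Real.log (S qopt j')) / 2
              = p j' * ((1/2) * Real.log (S q j') + (1/2) * Real.log (S qopt j')) := by ring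
            _ ≤ p j' * Real.log (S r j') := key j'
        · calc (p j * Real.log (S q j) + p j * Real.log (S qopt j)) / 2
              = p j * ((1/2) * Real.log (S q j) + (1/2) * Real.log (S qopt j)) := by ring
            _ < p j * Real.log (S r j) := keyj
      rw [hfq] at hlt
      have : f qopt < f r := by linarith
      exact absurd (hmax r hFr) (not_le.2 this)
    · rintro ⟨h0, h1, hSq⟩
      have hFq : Feas q := by
        rw [hFeas]
        exact ⟨h0, h1, fun j => by rw [hSq j, hs j]; exact hpos' j⟩
      have hfq : f q = f qopt := by
        rw [hf, hf]
        exact Finset.sum_congr rfl fun j _ => by rw [hSq j, hs j]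
      exact ⟨hFq, fun q' hq' => by rw [hfq]; exact hmax q' hq'⟩
  · rintro x ⟨hx0, hx1, hxS⟩ y ⟨hy0, hy1, hyS⟩ a b ha hb hab
    refine ⟨fun i => ?_, ?_, fun j => ?_⟩
    · have := hx0 i; have := hy0 i
      simp only [Pi.add_apply, Pi.smul_apply, smul_eq_mul]
      positivity
    · simp only [Pi.add_apply, Pi.smul_apply, smul_eq_mul]
      rw [Finset.sum_add_distrib, ← Finset.mul_sum, ← Finset.mul_sum, hx1, hy1]
      linarith
    · have : S (a • x + b • y) j = a * S x j + b * S y j := by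
        simp [hS, Finset.sum_add_distrib, Finset.mul_sum]
      rw [this, hxS j, hyS j]
      have : a * s j + b * s j = (a + b) * s j := by ring
      rw [this, hab, one_mul]
end

section
/- If q is a maximizer of f(q) = Σ_j p_j log S_j(q) over the standard simplex (with all S_j(q) > 0), then for every i with q_i > 0 one has Σ_{j ∈ Pts(i)} p_j / S_j(q) = 1, and for every i with q_i = 0 one has Σ_{j ∈ Pts(i)} p_j / S_j(q) ≤ 1. -/
open Finset

lemma log_lb_aux (x : ℝ) (hx : -(1/2) ≤ x) : x - 2*x^2 ≤ Real.log (1+x) := by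
  have h1 : 0 < 1 + x := by linarith
  have h2 := Real.log_le_sub_one_of_pos (show 0 < (1+x)⁻¹ by positivity)
  rw [Real.log_inv] at h2
  have h3 : x/(1+x) ≤ Real.log (1+x) := by
    have he : (1+x)⁻¹ - 1 = -(x/(1+x)) := by field_simp; ring
    rw [he] at h2; linarith
  have h4 : x - 2*x^2 ≤ x/(1+x) := by
    rw [le_div_iff₀ h1]; nlinarith [sq_nonneg x]
  linarith


/-- KKT / first-order optimality conditions. If `q` maximizes
`f(q) = ∑ⱼ pⱼ log Sⱼ(q)` over the standard simplex (with all `Sⱼ(q) > 0`), then for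
every `i` with `qᵢ > 0` one has `∑_{j ∈ Pts(i)} pⱼ / Sⱼ(q) = 1`, and for every `i`
with `qᵢ = 0` one has `∑_{j ∈ Pts(i)} pⱼ / Sⱼ(q) ≤ 1`. -/
theorem kkt_complementarity_conditions
    (n m : ℕ) (p : Fin n → ℝ) (C : Fin m → Finset (Fin n))
    (hp : ∀ j, 0 ≤ p j) (hpsum : ∑ j, p j = 1)
    (S : (Fin m → ℝ) → Fin n → ℝ)
    (hS : ∀ q' j, S q' j = ∑ i ∈ univ.filter (fun i => j ∈ C i), q' i)
    (f : (Fin m → ℝ) → ℝ)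
    (hf : ∀ q', f q' = ∑ j, p j * Real.log (S q' j))
    (Feas : (Fin m → ℝ) → Prop)
    (hFeas : ∀ q', Feas q' ↔ (∀ i, 0 ≤ q' i) ∧ ∑ i, q' i = 1 ∧ ∀ j, 0 < S q' j)
    (q : Fin m → ℝ) (hq : Feas q)
    (hmax : ∀ q', Feas q' → f q' ≤ f q) :
    ∀ i : Fin m,
      (0 < q i → ∑ j ∈ C i, p j / S q j = 1) ∧
      (q i = 0 → ∑ j ∈ C i, p j / S q j ≤ 1) := by
  rw [hFeas] at hq
  obtain ⟨hq1, hq2, hq3⟩ := hq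
  set g : Fin m → ℝ := fun i => ∑ j ∈ C i, p j / S q j with hg
  clear_value g
  -- n is nonempty
  rcases isEmpty_or_nonempty (Fin n) with hn | hn
  · exfalso; rw [Finset.univ_eq_empty, Finset.sum_empty] at hpsum; norm_num at hpsum
  -- key directional lemma
  have key : ∀ i i' : Fin m, 0 < q i → g i' ≤ g i := by
    intro i i' hqi
    by_cases hii : i = i'
    · subst hii; exact le_refl _
    by_contra hlt
    push_neg at hlt
    have hεpos : 0 < g i' - g i := by linarith
    set K := ∑ j, p j / (S q j)^2 with hK
    have hKnn : 0 ≤ K := Finset.sum_nonneg fun j _ => by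
      have := hq3 j; have := hp j; positivity
    clear_value K
    set Smin := Finset.univ.inf' (Finset.univ_nonempty) (fun j => S q j) with hSmin
    have hSminpos : 0 < Smin := by
      obtain ⟨j0, _, hj0⟩ := Finset.exists_mem_eq_inf' (Finset.univ_nonempty) (fun j => S q j)
      rw [hSmin, hj0]; exact hq3 j0
    have hSminle : ∀ j, Smin ≤ S q j := fun j => Finset.inf'_le _ (Finset.mem_univ j)
    clear_value Smin
    set ε := g i' - g i with hε
    clear_value ε
    set t := min (q i) (min (Smin/2) (ε/(2*K+1))) with ht
    have htpos : 0 < t := by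
      apply lt_min hqi
      exact lt_min (half_pos hSminpos) (div_pos hεpos (by linarith))
    have htqi : t ≤ q i := min_le_left _ _
    have htS : ∀ j, t ≤ S q j / 2 := fun j =>
      le_trans (le_trans (min_le_right _ _) (min_le_left _ _)) (by linarith [hSminle j])
    have htε : t ≤ ε/(2*K+1) := le_trans (min_le_right _ _) (min_le_right _ _)
    clear_value t
    set d : Fin n → ℝ := fun j => (if j ∈ C i' then (1:ℝ) else 0) - (if j ∈ C i then 1 else 0) with hd
    have hd1 : ∀ j, -1 ≤ d j ∧ d j ≤ 1 ∧ (d j)^2 ≤ 1 := by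
      intro j; simp only [hd]; split_ifs <;> norm_num
    set q' : Fin m → ℝ := fun k => q k + t * ((if k = i' then (1:ℝ) else 0) - (if k = i then 1 else 0)) with hq'
    have hSq' : ∀ j, S q' j = S q j + t * d j := by
      intro j
      rw [hS, hS]
      simp only [hq']
      rw [Finset.sum_add_distrib, ← Finset.mul_sum, Finset.sum_sub_distrib,
        Finset.sum_ite_eq', Finset.sum_ite_eq']
      simp [hd]
    have hS'pos : ∀ j, 0 < S q' j := by
      intro j
      have := (hd1 j).1
      have h2 := htS j
      have := hq3 j
      rw [hSq']
      nlinarith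
    have hfeas' : Feas q' := by
      rw [hFeas]
      refine ⟨?_, ?_, hS'pos⟩
      · intro k
        simp only [hq']
        by_cases hk : k = i
        · subst hk
          rw [if_neg hii, if_pos rfl]
          have := hq1 k; linarith
        · by_cases hk' : k = i'
          · subst hk'
            rw [if_pos rfl, if_neg hk]
            have := hq1 k; nlinarith
          · rw [if_neg hk', if_neg hk]
            have := hq1 k; linarith
      · simp only [hq']
        rw [Finset.sum_add_distrib, hq2, ← Finset.mul_sum, Finset.sum_sub_distrib,
          Finset.sum_ite_eq', Finset.sum_ite_eq']
        simp
    have hle := hmax q' hfeas'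
    clear_value q' d
    -- per-term bound
    have hterm : ∀ j : Fin n, p j * (t * d j / S q j) - 2*t^2 * (p j / (S q j)^2)
        ≤ p j * Real.log (S q' j) - p j * Real.log (S q j) := by
      intro j
      have hSj := hq3 j
      obtain ⟨hdl, hdu, hdsq⟩ := hd1 j
      set x := t * d j / S q j with hx
      clear_value x
      have hxlb : -(1/2) ≤ x := by
        rw [hx, le_div_iff₀ hSj]
        have h1 := htS j
        have h2 : t * (-1) ≤ t * d j := mul_le_mul_of_nonneg_left hdl htpos.le
        linarith
      have hlog := log_lb_aux x hxlb
      have h1x : 1 + x = S q' j / S q j := by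
        rw [hSq', hx]; field_simp
      have hlogeq : Real.log (S q' j) - Real.log (S q j) = Real.log (1 + x) := by
        rw [h1x, Real.log_div (ne_of_gt (hS'pos j)) (ne_of_gt hSj)]
      have hx2 : x^2 ≤ t^2 / (S q j)^2 := by
        rw [hx, div_pow]
        apply div_le_div_of_nonneg_right ?_ (by positivity)
        nlinarith
      have step1 : p j * x - 2*t^2 * (p j / (S q j)^2) ≤ p j * (x - 2*x^2) := by
        have hpj := hp j
        have : p j * x^2 ≤ p j * (t^2 / (S q j)^2) := by
          apply mul_le_mul_of_nonneg_left hx2 hpj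
        have he : 2*t^2 * (p j / (S q j)^2) = 2 * (p j * (t^2/(S q j)^2)) := by ring
        nlinarith
      have step2 : p j * (x - 2*x^2) ≤ p j * (Real.log (S q' j) - Real.log (S q j)) := by
        rw [hlogeq]; exact mul_le_mul_of_nonneg_left hlog (hp j)
      have hring : p j * (Real.log (S q' j) - Real.log (S q j))
          = p j * Real.log (S q' j) - p j * Real.log (S q j) := by ring
      linarith
    -- sum the bounds
    have hsum1 : ∑ j, p j * (t * d j / S q j) = t * ε := by
      have : ∀ j, p j * (t * d j / S q j)
          = t * ((if j ∈ C i' then p j / S q j else 0) - (if j ∈ C i then p j / S q j else 0)) := by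
        intro j; simp only [hd]; split_ifs <;> ring
      rw [Finset.sum_congr rfl (fun j _ => this j), ← Finset.mul_sum,
        Finset.sum_sub_distrib, Finset.sum_ite_mem, Finset.sum_ite_mem,
        Finset.univ_inter, Finset.univ_inter]
      rw [hε]
      simp only [hg]
    have hsum2 : ∑ j, (p j * (t * d j / S q j) - 2*t^2 * (p j / (S q j)^2))
        ≤ f q' - f q := by
      rw [hf, hf, ← Finset.sum_sub_distrib]
      exact Finset.sum_le_sum fun j _ => hterm j
    rw [Finset.sum_sub_distrib, hsum1, ← Finset.mul_sum, ← hK] at hsum2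
    -- contradiction
    have h2tK : 2 * t * K < ε := by
      have h5 : t * (2*K+1) ≤ ε := (le_div_iff₀ (show (0:ℝ) < 2*K+1 by linarith)).mp htε
      nlinarith
    nlinarith [mul_pos htpos (show (0:ℝ) < ε - 2*t*K by linarith)]
  -- weighted sum identity
  have hqg : ∑ i, q i * g i = 1 := by
    have h1 : ∀ i : Fin m, q i * g i = ∑ j, (if j ∈ C i then q i * (p j / S q j) else 0) := by
      intro i
      rw [Finset.sum_ite_mem, Finset.univ_inter]
      simp only [hg]
      rw [Finset.mul_sum]
    rw [Finset.sum_congr rfl (fun i _ => h1 i), Finset.sum_comm]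
    have h2 : ∀ j : Fin n, ∑ i, (if j ∈ C i then q i * (p j / S q j) else 0) = p j := by
      intro j
      have h3 : ∀ i : Fin m, (if j ∈ C i then q i * (p j / S q j) else 0)
          = (if j ∈ C i then q i else 0) * (p j / S q j) := by
        intro i; split_ifs <;> ring
      rw [Finset.sum_congr rfl (fun i _ => h3 i), ← Finset.sum_mul]
      have h4 : ∑ i, (if j ∈ C i then q i else 0) = S q j := by
        rw [hS, Finset.sum_filter]
      rw [h4]
      rw [mul_comm]
      exact div_mul_cancel₀ _ (ne_of_gt (hq3 j))
    rw [Finset.sum_congr rfl (fun j _ => h2 j), hpsum]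
  -- there is a positive coordinate
  have hi0 : ∃ i0, 0 < q i0 := by
    by_contra h
    push_neg at h
    have : ∑ i, q i = 0 := Finset.sum_eq_zero fun i _ => le_antisymm (h i) (hq1 i)
    rw [hq2] at this; norm_num at this
  obtain ⟨i0, hi0⟩ := hi0
  have hgi0 : g i0 = 1 := by
    have heq : ∑ i, q i * g i = ∑ i, q i * g i0 := by
      apply Finset.sum_congr rfl
      intro i _
      rcases eq_or_lt_of_le (hq1 i) with h | h
      · rw [← h]; ring
      · have e1 := key i i0 h
        have e2 := key i0 i hi0
        have : g i = g i0 := le_antisymm e2 e1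
        rw [this]
    rw [heq, ← Finset.sum_mul, hq2, one_mul] at hqg
    exact hqg
  intro i
  constructor
  · intro hpos
    have e1 := key i i0 hpos
    have e2 := key i0 i hi0
    have h6 : g i = 1 := by rw [le_antisymm e2 e1, hgi0]
    simp only [hg] at h6
    exact h6
  · intro _
    have h6 := key i0 i hi0
    rw [hgi0] at h6
    simp only [hg] at h6
    exact h6
end

section
/- Monotonicity: if every maximal simplex of complex C is contained in some maximal simplex of complex C' (both on the same vertex set), then H(C',P) ≤ H(C,P). -/
open Finset

/-- Monotonicity. If every maximal simplex of complex `C` is contained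
in some maximal simplex of complex `C'` (both on the same vertex set), then
`H(C',P) ≤ H(C,P)`. -/
theorem simplicial_entropy_monotone
    (n m m' : ℕ) (p : Fin n → ℝ) (hp : ∀ j, 0 ≤ p j) (hpsum : ∑ j, p j = 1)
    (C : Fin m → Finset (Fin n)) (C' : Fin m' → Finset (Fin n))
    (href : ∀ i : Fin m, ∃ i' : Fin m', C i ⊆ C' i')
    (S : (Fin m → ℝ) → Fin n → ℝ)
    (hS : ∀ q j, S q j = ∑ i ∈ univ.filter (fun i => j ∈ C i), q i)
    (S' : (Fin m' → ℝ) → Fin n → ℝ)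
    (hS' : ∀ q j, S' q j = ∑ i ∈ univ.filter (fun i => j ∈ C' i), q i)
    (obj : (Fin m → ℝ) → ℝ)
    (hobj : ∀ q, obj q = ∑ j, p j * Real.log (1 / S q j))
    (obj' : (Fin m' → ℝ) → ℝ)
    (hobj' : ∀ q, obj' q = ∑ j, p j * Real.log (1 / S' q j))
    (Feas : (Fin m → ℝ) → Prop)
    (hFeas : ∀ q, Feas q ↔ (∀ i, 0 ≤ q i) ∧ ∑ i, q i = 1 ∧
      ∀ j, 0 < p j → 0 < S q j)
    (Feas' : (Fin m' → ℝ) → Prop)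
    (hFeas' : ∀ q, Feas' q ↔ (∀ i, 0 ≤ q i) ∧ ∑ i, q i = 1 ∧
      ∀ j, 0 < p j → 0 < S' q j)
    (qopt : Fin m → ℝ) (hqopt : Feas qopt)
    (hmin : ∀ q, Feas q → obj qopt ≤ obj q)
    (qopt' : Fin m' → ℝ) (hqopt' : Feas' qopt')
    (hmin' : ∀ q, Feas' q → obj' qopt' ≤ obj' q)
    (H H' : ℝ) (hH : H = obj qopt) (hH' : H' = obj' qopt') :
    H' ≤ H := by
  classical
  obtain ⟨hq0, hq1, hqS⟩ := (hFeas qopt).mp hqopt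
  set σ : Fin m → Fin m' := fun i => (href i).choose with hσ
  have hσspec : ∀ i, C i ⊆ C' (σ i) := fun i => (href i).choose_spec
  set q' : Fin m' → ℝ := fun i' => ∑ i ∈ univ.filter (fun i => σ i = i'), qopt i with hq'
  have hq'0 : ∀ i', 0 ≤ q' i' := fun i' => Finset.sum_nonneg fun i _ => hq0 i
  have hq'1 : ∑ i', q' i' = 1 := by
    rw [← hq1]
    rw [Finset.sum_fiberwise_eq_sum_filter univ univ σ qopt]
    simp
  have hSle : ∀ j, S qopt j ≤ S' q' j := by
    intro j
    rw [hS, hS', hq']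
    rw [Finset.sum_fiberwise_eq_sum_filter univ (univ.filter (fun i' => j ∈ C' i')) σ qopt]
    apply Finset.sum_le_sum_of_subset_of_nonneg
    · intro i hi
      simp only [Finset.mem_filter, Finset.mem_univ, true_and] at hi ⊢
      exact hσspec i hi
    · intro i _ _; exact hq0 i
  have hq'Feas : Feas' q' := by
    rw [hFeas']
    exact ⟨hq'0, hq'1, fun j hj => lt_of_lt_of_le (hqS j hj) (hSle j)⟩
  have hobjle : obj' q' ≤ obj qopt := by
    rw [hobj, hobj']
    apply Finset.sum_le_sum
    intro j _
    rcases eq_or_lt_of_le (hp j) with h0 | h0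
    · simp [← h0]
    · apply mul_le_mul_of_nonneg_left _ (hp j)
      rw [one_div, one_div, Real.log_inv, Real.log_inv, neg_le_neg_iff]
      exact Real.log_le_log (hqS j h0) (hSle j)
  calc H' = obj' qopt' := hH'
    _ ≤ obj' q' := hmin' q' hq'Feas
    _ ≤ obj qopt := hobjle
    _ = H := hH.symm
end
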